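/- Let n ≥ 2 and let N_{n,2} be the free nilpotent group of rank n and step 2 with generating family X = (x_1, …, x_n). Every palindrome p in N_{n,2} (with respect to X) can be written, for some index j with 1 ≤ j ≤ n and integers α_1, …, α_n, in the normal form p = x_1^{2α_1} ⋯ x_{j-1}^{2α_{j-1}} · x_j^{α_j} · x_{j+1}^{2α_{j+1}} ⋯ x_n^{2α_n} · ∏_{1 ≤ l < k ≤ n, k ≠ j, l ≠ j} [x_k, x_l]^{2 α_k α_l} · ∏_{t=1}^{j-1} [x_j, x_t]^{α_j α_t} · ∏_{s=j+1}^{n} [x_s, x_j]^{α_s α_j}, where the commutator factors are central in N_{n,2}. -/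

import Mathlib

/-- The element of `G` represented by a word in the alphabet `X^{±1}`:
a letter `(i, true)` stands for `X i` and `(i, false)` for `(X i)⁻¹`. -/
def evalWord {G : Type*} {n : ℕ} [Group G] (X : Fin n → G) (w : List (Fin n × Bool)) : G :=
  (w.map fun l => if l.2 then X l.1 else (X l.1)⁻¹).prod

/-- `g` is a palindrome with respect to the generating family `X` if it is represented by
some word whose sequence of letters equals its reverse. -/
def IsPalindrome {G : Type*} {n : ℕ} [Group G] (X : Fin n → G) (g : G) : Prop :=
  ∃ w : List (Fin n × Bool), w.reverse = w ∧ evalWord X w = g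

/-- `g` is a product of `k` palindromes with respect to `X`. -/
def IsPalProd {G : Type*} {n : ℕ} [Group G] (X : Fin n → G) (k : ℕ) (g : G) : Prop :=
  ∃ f : Fin k → G, (∀ i, IsPalindrome X (f i)) ∧ (List.ofFn f).prod = g

/-- The palindromic length of `g` with respect to `X`, valued in `ℕ∞`. -/
noncomputable def palLength {G : Type*} {n : ℕ} [Group G] (X : Fin n → G) (g : G) : ℕ∞ :=
  sInf {k : ℕ∞ | ∃ m : ℕ, k = (m : ℕ∞) ∧ IsPalProd X m g}

/-- The palindromic width of `G` with respect to `X`, valued in `ℕ∞`. -/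
noncomputable def palWidth {G : Type*} {n : ℕ} [Group G] (X : Fin n → G) : ℕ∞ :=
  ⨆ g : G, palLength X g

/-- The free nilpotent group `N_{n,r}` of rank `n` and step `r`: the quotient of the free
group on `n` generators by `γ_{r+1} = lowerCentralSeries _ r` (indices: `γ_1` is the
whole group and corresponds to index `0`). -/
abbrev FreeNilpotent (n r : ℕ) :=
  FreeGroup (Fin n) ⧸ (⊤ : Subgroup (FreeGroup (Fin n))).lowerCentralSeries r

/-- The images `x_1, …, x_n` of the free basis in `N_{n,r}`. -/
def nilGen (n r : ℕ) (i : Fin n) : FreeNilpotent n r :=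
  QuotientGroup.mk (FreeGroup.of i)

/-- The commutator convention of the paper: `[a, b] = a⁻¹ b⁻¹ a b`. -/
def pcomm {G : Type*} [Group G] (a b : G) : G := a⁻¹ * b⁻¹ * a * b

/-- The list of all pairs `(k, l)` of indices with `l < k`, used to order products of
basic commutators (which are central, so the order is immaterial). -/
def pairList (n : ℕ) : List (Fin n × Fin n) :=
  (List.finRange n).flatMap fun k => ((List.finRange n).filter fun l => l < k).map fun l => (k, l)

namespace PalAux

variable {G : Type*} [Group G] {n : ℕ}

instance centerCommGroup : CommGroup (Subgroup.center G) :=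
  { (inferInstance : Group (Subgroup.center G)) with mul_comm := fun a b => mul_comm' a b }

theorem prod_flatMap {M α β : Type*} [Monoid M] (l : List α) (f : α → List β) (g : β → M) :
    ((l.flatMap f).map g).prod = (l.map fun a => ((f a).map g).prod).prod := by
  induction l with
  | nil => simp
  | cons a l ih => simp [List.flatMap_cons, ih]

theorem prod_flatMap' {M α : Type*} [Monoid M] (l : List α) (f : α → List M) :
    (l.flatMap f).prod = (l.map fun a => (f a).prod).prod := by
  induction l with
  | nil => simp
  | cons a l ih => simp [List.flatMap_cons, ih]

theorem prod_filter_eq_prod_ite {M α : Type*} [Monoid M] (l : List α) (p : α → Bool) (g : α → M) :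
    ((l.filter p).map g).prod = (l.map fun a => if p a then g a else 1).prod := by
  induction l with
  | nil => rfl
  | cons a l ih => by_cases h : p a <;> simp [List.filter_cons, h, ih]

variable (x : Fin n → G) (hc : ∀ k l, pcomm (x k) (x l) ∈ Subgroup.center G)

def D (k l : Fin n) : Subgroup.center G := ⟨pcomm (x k) (x l), hc k l⟩

theorem centerMul (z : Subgroup.center G) (g : G) : g * (z : G) = (z : G) * g :=
  Subgroup.mem_center_iff.mp z.2 g

theorem D_symm (k l : Fin n) : D x hc l k = (D x hc k l)⁻¹ := by
  ext; show pcomm (x l) (x k) = (pcomm (x k) (x l))⁻¹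
  simp only [pcomm]; group

theorem D_diag (k : Fin n) : D x hc k k = 1 := by
  ext; show pcomm (x k) (x k) = 1
  simp only [pcomm]; group

theorem swap_zpow (k l : Fin n) (m p : ℤ) :
    x k ^ m * x l ^ p = x l ^ p * x k ^ m * ((D x hc k l : G) ^ (m * p)) := by
  set c : G := (D x hc k l : G) with hcdef
  have hz : ∀ g : G, Commute g c := fun g => Subgroup.mem_center_iff.mp (hc k l) g
  have hz1 : ∀ (q : ℤ) (g : G), g * c ^ q = c ^ q * g := fun q g => ((hz g).zpow_right q).eq
  have h1 : SemiconjBy (x k) (x l) (x l * c) := by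
    show x k * x l = x l * c * x k
    rw [mul_assoc, ← (hz (x k)).eq, ← mul_assoc]
    show x k * x l = x l * x k * pcomm (x k) (x l)
    simp only [pcomm]; group
  have h2 := h1.zpow_right p
  rw [(hz (x l)).mul_zpow] at h2
  have h3 : SemiconjBy (x l ^ p) (x k) (c ^ (-p) * x k) := by
    show x l ^ p * x k = c ^ (-p) * x k * x l ^ p
    have e0 : (-p) + p = 0 := by ring
    calc x l ^ p * x k
        = c ^ (-p) * (c ^ p * (x l ^ p * x k)) := by
          rw [← mul_assoc, ← mul_assoc, ← zpow_add, e0, zpow_zero, one_mul]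
      _ = c ^ (-p) * (x l ^ p * c ^ p * x k) := by
          rw [← mul_assoc (c ^ p), ← hz1 p (x l ^ p)]
      _ = c ^ (-p) * (x k * x l ^ p) := by rw [← h2.eq]
      _ = c ^ (-p) * x k * x l ^ p := (mul_assoc _ _ _).symm
  have h4 := h3.zpow_right m
  rw [((hz (x k)).zpow_right (-p)).symm.mul_zpow, ← zpow_mul] at h4
  have e1 : -p * m + m * p = 0 := by ring
  calc x k ^ m * x l ^ p
      = c ^ (-p * m) * (c ^ (m * p) * (x k ^ m * x l ^ p)) := by
        rw [← mul_assoc, ← zpow_add, e1, zpow_zero, one_mul]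
    _ = c ^ (-p * m) * (x k ^ m * x l ^ p * c ^ (m * p)) := by
        rw [← hz1 (m * p) (x k ^ m * x l ^ p)]
    _ = x l ^ p * x k ^ m * c ^ (m * p) := by
        rw [h4.eq]; simp only [mul_assoc]

theorem center_zpow_comm (z : Subgroup.center G) (q : ℤ) (g : G) :
    (z : G) ^ q * g = g * (z : G) ^ q :=
  (((show Commute g (z : G) from centerMul z g)).zpow_right q).eq.symm

def Hd (E : Fin n → ℤ) : G := ((List.finRange n).map fun t => x t ^ E t).prod

theorem moveR (E : Fin n → ℤ) (i : Fin n) (m : ℤ) :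
    ∀ l : List (Fin n),
      (l.map fun t => x t ^ E t).prod * x i ^ m
        = x i ^ m * (l.map fun t => x t ^ E t).prod
            * ((l.map fun t => D x hc t i ^ (E t * m)).prod : Subgroup.center G)
  | [] => by simp
  | a :: l => by
    have ih := moveR E i m l
    simp only [List.map_cons, List.prod_cons, Subgroup.coe_mul]
    set P : G := (l.map fun t => x t ^ E t).prod with hP
    set g : Subgroup.center G := (l.map fun t => D x hc t i ^ (E t * m)).prod with hg
    calc x a ^ E a * P * x i ^ m
        = x a ^ E a * (P * x i ^ m) := by rw [mul_assoc]
      _ = x a ^ E a * (x i ^ m * P * (g : G)) := by rw [ih]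
      _ = (x a ^ E a * x i ^ m) * (P * (g : G)) := by simp only [mul_assoc]
      _ = (x i ^ m * x a ^ E a * (D x hc a i : G) ^ (E a * m)) * (P * (g : G)) := by
          rw [swap_zpow]
      _ = x i ^ m * (x a ^ E a * P) * (((D x hc a i) ^ (E a * m) * g : Subgroup.center G) : G) := by
          simp only [Subgroup.coe_mul, SubgroupClass.coe_zpow, mul_assoc]
          rw [← mul_assoc ((D x hc a i : G) ^ (E a * m)) P, center_zpow_comm (D x hc a i) (E a * m) P,
            mul_assoc]

theorem moveL (E : Fin n → ℤ) (i : Fin n) (m : ℤ) :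
    ∀ l : List (Fin n),
      x i ^ m * (l.map fun t => x t ^ E t).prod
        = (l.map fun t => x t ^ E t).prod * x i ^ m
            * ((l.map fun t => D x hc i t ^ (m * E t)).prod : Subgroup.center G)
  | [] => by simp
  | a :: l => by
    have ih := moveL E i m l
    simp only [List.map_cons, List.prod_cons, Subgroup.coe_mul]
    set P : G := (l.map fun t => x t ^ E t).prod with hP
    set g : Subgroup.center G := (l.map fun t => D x hc i t ^ (m * E t)).prod with hg
    calc x i ^ m * (x a ^ E a * P)
        = x i ^ m * x a ^ E a * P := by rw [mul_assoc]
      _ = x a ^ E a * x i ^ m * (D x hc i a : G) ^ (m * E a) * P := by rw [swap_zpow]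
      _ = x a ^ E a * (x i ^ m * P) * (D x hc i a : G) ^ (m * E a) := by
          simp only [mul_assoc]
          rw [center_zpow_comm (D x hc i a) (m * E a) P]
      _ = x a ^ E a * (P * x i ^ m * (g : G)) * (D x hc i a : G) ^ (m * E a) := by rw [ih]
      _ = x a ^ E a * P * x i ^ m * (((D x hc i a) ^ (m * E a) * g : Subgroup.center G) : G) := by
          simp only [Subgroup.coe_mul, SubgroupClass.coe_zpow, mul_assoc]
          rw [← center_zpow_comm (D x hc i a) (m * E a) (g : G)]

theorem finRange_split (i : Fin n) :
    List.finRange n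
      = ((List.finRange n).filter fun t => t < i) ++ i :: ((List.finRange n).filter fun t => i < t) := by
  obtain ⟨l₁, l₂, h⟩ := List.append_of_mem (List.mem_finRange i)
  have hp := List.pairwise_lt_finRange n
  rw [h] at hp
  rw [List.pairwise_append] at hp
  obtain ⟨hp1, hp2, h12⟩ := hp
  rw [List.pairwise_cons] at hp2
  have hl1 : ∀ a ∈ l₁, a < i := fun a ha => h12 a ha i List.mem_cons_self
  have hl2 : ∀ a ∈ l₂, i < a := hp2.1
  have e1 : (l₁ ++ i :: l₂).filter (fun t => decide (t < i)) = l₁ := by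
    rw [List.filter_append, List.filter_cons_of_neg (by simp), List.filter_eq_self.mpr
      (fun a ha => by simpa using hl1 a ha), List.filter_eq_nil_iff.mpr
      (fun a ha => by simpa using not_lt_of_gt (hl2 a ha)), List.append_nil]
  have e2 : (l₁ ++ i :: l₂).filter (fun t => decide (i < t)) = l₂ := by
    rw [List.filter_append, List.filter_cons_of_neg (by simp), List.filter_eq_nil_iff.mpr
      (fun a ha => by simpa using not_lt_of_gt (hl1 a ha)), List.filter_eq_self.mpr
      (fun a ha => by simpa using hl2 a ha), List.nil_append]
  conv_lhs => rw [h]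
  rw [h, e1, e2]

theorem prod_map_single (i : Fin n) (s : ℤ) :
    ∀ l : List (Fin n),
      (l.map fun t => x t ^ (if t = i then s else 0)).prod = x i ^ (s * l.count i)
  | [] => by simp
  | a :: l => by
    have ih := prod_map_single i s l
    by_cases h : a = i
    · subst h
      simp only [List.map_cons, List.prod_cons, if_pos rfl, ih, List.count_cons_self]
      rw [← zpow_add]
      congr 1
      push_cast
      ring
    · simp only [List.map_cons, List.prod_cons, if_neg h, zpow_zero, one_mul, ih,
        List.count_cons_of_ne h]

theorem H_single (i : Fin n) (s : ℤ) :
    Hd x (fun t => if t = i then s else 0) = x i ^ s := by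
  rw [Hd, prod_map_single, List.count_eq_one_of_mem (List.nodup_finRange n) (List.mem_finRange i)]
  norm_num

theorem conj_H (E : Fin n → ℤ) (i : Fin n) (m : ℤ) :
    x i ^ m * Hd x E * x i ^ m
      = Hd x (fun t => E t + if t = i then 2 * m else 0)
        * (((((List.finRange n).filter fun t => i < t).map fun t =>
              D x hc t i ^ (E t * (2 * m))).prod
            * ((List.finRange n).map fun t => D x hc i t ^ (m * E t)).prod
            : Subgroup.center G) : G) := by
  set Lam : Subgroup.center G := ((List.finRange n).map fun t => D x hc i t ^ (m * E t)).prod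
    with hLam
  set Gb : Subgroup.center G :=
    (((List.finRange n).filter fun t => i < t).map fun t => D x hc t i ^ (E t * (2 * m))).prod
    with hGb
  set A : List (Fin n) := (List.finRange n).filter fun t => t < i with hA
  set B : List (Fin n) := (List.finRange n).filter fun t => i < t with hB
  have hmm : m + m = 2 * m := by ring
  have step1 : x i ^ m * Hd x E * x i ^ m = Hd x E * x i ^ (2 * m) * (Lam : G) := by
    rw [Hd, moveL x hc E i m, ← Hd, ← hLam]
    calc Hd x E * x i ^ m * (Lam : G) * x i ^ m
        = Hd x E * (x i ^ m * x i ^ m) * (Lam : G) := by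
          simp only [mul_assoc]
          rw [← centerMul Lam (x i ^ m)]
      _ = Hd x E * x i ^ (2 * m) * (Lam : G) := by rw [← zpow_add, hmm]
  have hAmem : ∀ t ∈ A, t < i := by
    intro t ht
    rw [hA, List.mem_filter] at ht
    simpa using ht.2
  have hBmem : ∀ t ∈ B, i < t := by
    intro t ht
    rw [hB, List.mem_filter] at ht
    simpa using ht.2
  have hsplit := finRange_split (n := n) i
  rw [← hA, ← hB] at hsplit
  have congrA : (A.map fun t => x t ^ (E t + if t = i then 2 * m else 0))
      = A.map fun t => x t ^ E t := by
    apply List.map_congr_left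
    intro t ht
    rw [if_neg (ne_of_lt (hAmem t ht)), add_zero]
  have congrB : (B.map fun t => x t ^ (E t + if t = i then 2 * m else 0))
      = B.map fun t => x t ^ E t := by
    apply List.map_congr_left
    intro t ht
    rw [if_neg (ne_of_gt (hBmem t ht)), add_zero]
  have hHE : Hd x E
      = (A.map fun t => x t ^ E t).prod * (x i ^ E i * (B.map fun t => x t ^ E t).prod) := by
    rw [Hd]
    conv_lhs => rw [hsplit]
    rw [List.map_append, List.prod_append, List.map_cons, List.prod_cons]
  have hHE' : Hd x (fun t => E t + if t = i then 2 * m else 0)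
      = (A.map fun t => x t ^ E t).prod
        * (x i ^ (E i + 2 * m) * (B.map fun t => x t ^ E t).prod) := by
    rw [Hd]
    conv_lhs => rw [hsplit]
    rw [List.map_append, List.prod_append, List.map_cons, List.prod_cons, congrA, congrB,
      if_pos rfl]
  have step2 : Hd x E * x i ^ (2 * m)
      = Hd x (fun t => E t + if t = i then 2 * m else 0) * (Gb : G) := by
    rw [hHE, hHE']
    have mr := moveR x hc E i (2 * m) B
    calc (A.map fun t => x t ^ E t).prod * (x i ^ E i * (B.map fun t => x t ^ E t).prod)
          * x i ^ (2 * m)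
        = (A.map fun t => x t ^ E t).prod
            * (x i ^ E i * ((B.map fun t => x t ^ E t).prod * x i ^ (2 * m))) := by
          simp only [mul_assoc]
      _ = (A.map fun t => x t ^ E t).prod
            * (x i ^ E i * (x i ^ (2 * m) * (B.map fun t => x t ^ E t).prod * (Gb : G))) := by
          rw [mr, hGb]
      _ = (A.map fun t => x t ^ E t).prod
            * ((x i ^ E i * x i ^ (2 * m)) * (B.map fun t => x t ^ E t).prod) * (Gb : G) := by
          simp only [mul_assoc]
      _ = (A.map fun t => x t ^ E t).prod
            * (x i ^ (E i + 2 * m) * (B.map fun t => x t ^ E t).prod) * (Gb : G) := by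
          rw [← zpow_add]
  rw [step1, step2, Subgroup.coe_mul]
  simp only [mul_assoc]

def Phi (β : Fin n → Fin n → ℤ) : Subgroup.center G :=
  ∏ k, ∏ l, D x hc k l ^ β k l

theorem Phi_add (β γ : Fin n → Fin n → ℤ) :
    Phi x hc (fun k l => β k l + γ k l) = Phi x hc β * Phi x hc γ := by
  simp only [Phi, zpow_add, Finset.prod_mul_distrib]

theorem Phi_zero (β : Fin n → Fin n → ℤ) (hβ : ∀ k l, β k l = 0) : Phi x hc β = 1 := by
  simp only [Phi]
  refine Finset.prod_eq_one fun k _ => Finset.prod_eq_one fun l _ => ?_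
  rw [hβ, zpow_zero]

theorem Phi_triangle (β : Fin n → Fin n → ℤ) :
    Phi x hc β = ∏ k, ∏ l, if l < k then D x hc k l ^ (β k l - β l k) else 1 := by
  have h1 : Phi x hc β
      = (∏ k, ∏ l, if l < k then D x hc k l ^ β k l else 1)
        * (∏ k, ∏ l, if k < l then D x hc k l ^ β k l else 1) := by
    rw [Phi, ← Finset.prod_mul_distrib]
    refine Finset.prod_congr rfl fun k _ => ?_
    rw [← Finset.prod_mul_distrib]
    refine Finset.prod_congr rfl fun l _ => ?_
    rcases lt_trichotomy l k with h | h | h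
    · rw [if_pos h, if_neg (asymm h), mul_one]
    · subst h
      rw [if_neg (lt_irrefl l), D_diag, one_zpow, one_mul]
    · rw [if_neg (asymm h), if_pos h, one_mul]
  have h2 : (∏ k, ∏ l, if k < l then D x hc k l ^ β k l else 1)
      = ∏ k, ∏ l, if l < k then D x hc k l ^ (-(β l k)) else 1 := by
    rw [Finset.prod_comm]
    refine Finset.prod_congr rfl fun k _ => Finset.prod_congr rfl fun l _ => ?_
    by_cases h : l < k
    · rw [if_pos h, if_pos h, D_symm, inv_zpow, ← zpow_neg]
    · rw [if_neg h, if_neg h]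
  rw [h1, h2, ← Finset.prod_mul_distrib]
  refine Finset.prod_congr rfl fun k _ => ?_
  rw [← Finset.prod_mul_distrib]
  refine Finset.prod_congr rfl fun l _ => ?_
  by_cases h : l < k
  · rw [if_pos h, if_pos h, if_pos h, ← zpow_add, sub_eq_add_neg]
  · rw [if_neg h, if_neg h, if_neg h, mul_one]

theorem Phi_eq_of_antisym (β γ : Fin n → Fin n → ℤ)
    (h : ∀ k l, l < k → β k l - β l k = γ k l - γ l k) :
    Phi x hc β = Phi x hc γ := by
  rw [Phi_triangle, Phi_triangle]
  refine Finset.prod_congr rfl fun k _ => Finset.prod_congr rfl fun l _ => ?_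
  by_cases hlk : l < k
  · rw [if_pos hlk, if_pos hlk, h k l hlk]
  · rw [if_neg hlk, if_neg hlk]

theorem coe_map_prod {A : Type*} (l : List A) (g : A → Subgroup.center G) :
    (l.map fun a => ((g a : Subgroup.center G) : G)).prod
      = (((l.map g).prod : Subgroup.center G) : G) := by
  have h : (l.map fun a => ((g a : Subgroup.center G) : G))
      = (l.map g).map ((Subgroup.center G).subtype) := by
    rw [List.map_map]; rfl
  rw [h, ← MonoidHom.map_list_prod]
  rfl

theorem list_filter_map_to_fin {M : Type*} [CommMonoid M] (p : Fin n → Prop) [DecidablePred p]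
    (g : Fin n → M) :
    (((List.finRange n).filter fun t => p t).map g).prod = ∏ t, if p t then g t else 1 := by
  rw [prod_filter_eq_prod_ite, Fin.prod_univ_def]
  congr 1
  apply List.map_congr_left
  intro a _
  simp

def Emap (j : Fin n) (α : Fin n → ℤ) : Fin n → ℤ := fun t => if t = j then α j else 2 * α t

def Bmat (j : Fin n) (α : Fin n → ℤ) : Fin n → Fin n → ℤ := fun k l =>
  if l < k then (if k = j ∨ l = j then α k * α l else 2 * (α k * α l)) else 0

def Cmat (E : Fin n → ℤ) (i : Fin n) (m : ℤ) : Fin n → Fin n → ℤ := fun k l =>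
  (if l = i ∧ i < k then E k * (2 * m) else 0) + (if k = i then m * E l else 0)

theorem corr_eq_Phi (E : Fin n → ℤ) (i : Fin n) (m : ℤ) :
    ((((List.finRange n).filter fun t => i < t).map fun t =>
        D x hc t i ^ (E t * (2 * m))).prod
      * ((List.finRange n).map fun t => D x hc i t ^ (m * E t)).prod
      : Subgroup.center G)
    = Phi x hc (Cmat E i m) := by
  have h1 : (((List.finRange n).filter fun t => i < t).map fun t =>
        D x hc t i ^ (E t * (2 * m))).prod
      = Phi x hc (fun k l => if l = i ∧ i < k then E k * (2 * m) else 0) := by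
    rw [list_filter_map_to_fin (fun t => i < t), Phi]
    refine Finset.prod_congr rfl fun k _ => ?_
    rw [Finset.prod_eq_single i (fun b _ hb => by rw [if_neg (fun hh => hb hh.1), zpow_zero])
      (fun hi => absurd (Finset.mem_univ i) hi)]
    by_cases h : i < k
    · rw [if_pos h, if_pos ⟨rfl, h⟩]
    · rw [if_neg h, if_neg (fun hh => h hh.2), zpow_zero]
  have h2 : (((List.finRange n).map fun t => D x hc i t ^ (m * E t)).prod : Subgroup.center G)
      = Phi x hc (fun k l => if k = i then m * E l else 0) := by
    rw [Phi, Finset.prod_eq_single i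
      (fun b _ hb => Finset.prod_eq_one fun l _ => by rw [if_neg hb, zpow_zero])
      (fun hi => absurd (Finset.mem_univ i) hi)]
    rw [← Fin.prod_univ_def]
    exact Finset.prod_congr rfl fun l _ => by rw [if_pos rfl]
  rw [h1, h2]
  exact (Phi_add x hc _ _).symm

theorem C1_eq (j : Fin n) (α : Fin n → ℤ) :
    ((((pairList n).filter fun q => q.1 ≠ j ∧ q.2 ≠ j).map fun q =>
        pcomm (x q.1) (x q.2) ^ (2 * α q.1 * α q.2)).prod)
      = ((Phi x hc (fun k l => if l < k ∧ k ≠ j ∧ l ≠ j then 2 * α k * α l else 0)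
          : Subgroup.center G) : G) := by
  have hco : (((pairList n).filter fun q => q.1 ≠ j ∧ q.2 ≠ j).map fun q =>
        pcomm (x q.1) (x q.2) ^ (2 * α q.1 * α q.2))
      = (((pairList n).filter fun q => q.1 ≠ j ∧ q.2 ≠ j).map fun q =>
          ((D x hc q.1 q.2 ^ (2 * α q.1 * α q.2) : Subgroup.center G) : G)) := by
    apply List.map_congr_left
    intro q _
    rw [SubgroupClass.coe_zpow]
    rfl
  rw [hco, coe_map_prod]
  congr 1
  rw [prod_filter_eq_prod_ite]
  rw [pairList, List.map_flatMap, prod_flatMap']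
  rw [← Fin.prod_univ_def, Phi]
  refine Finset.prod_congr rfl fun k _ => ?_
  rw [List.map_map]
  have : ((List.finRange n).filter fun l => l < k).map
        ((fun q => if decide (q.1 ≠ j ∧ q.2 ≠ j) then D x hc q.1 q.2 ^ (2 * α q.1 * α q.2) else 1)
          ∘ fun l => (k, l))
      = ((List.finRange n).filter fun l => l < k).map
        (fun l => if k ≠ j ∧ l ≠ j then D x hc k l ^ (2 * α k * α l) else 1) := by
    apply List.map_congr_left
    intro a _
    simp only [Function.comp_apply, decide_eq_true_eq]
  rw [this, list_filter_map_to_fin (fun l => l < k)]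
  refine Finset.prod_congr rfl fun l _ => ?_
  by_cases h1 : l < k
  · rw [if_pos h1]
    by_cases h2 : k ≠ j ∧ l ≠ j
    · rw [if_pos h2, if_pos ⟨h1, h2⟩]
    · rw [if_neg h2, if_neg (fun hh => h2 ⟨hh.2.1, hh.2.2⟩), zpow_zero]
  · rw [if_neg h1, if_neg (fun hh => h1 hh.1), zpow_zero]

theorem C2_eq (j : Fin n) (α : Fin n → ℤ) :
    ((((List.finRange n).filter fun t => t < j).map fun t =>
        pcomm (x j) (x t) ^ (α j * α t)).prod)
      = ((Phi x hc (fun k l => if k = j ∧ l < j then α j * α l else 0)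
          : Subgroup.center G) : G) := by
  have hco : (((List.finRange n).filter fun t => t < j).map fun t =>
        pcomm (x j) (x t) ^ (α j * α t))
      = (((List.finRange n).filter fun t => t < j).map fun t =>
          ((D x hc j t ^ (α j * α t) : Subgroup.center G) : G)) := by
    apply List.map_congr_left
    intro q _
    rw [SubgroupClass.coe_zpow]
    rfl
  rw [hco, coe_map_prod]
  congr 1
  rw [list_filter_map_to_fin (fun t => t < j), Phi]
  rw [Finset.prod_eq_single j
    (fun b _ hb => Finset.prod_eq_one fun l _ => by rw [if_neg (fun hh => hb hh.1), zpow_zero])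
    (fun hj => absurd (Finset.mem_univ j) hj)]
  refine Finset.prod_congr rfl fun l _ => ?_
  by_cases h : l < j
  · rw [if_pos h, if_pos ⟨rfl, h⟩]
  · rw [if_neg h, if_neg (fun hh => h hh.2), zpow_zero]

theorem C3_eq (j : Fin n) (α : Fin n → ℤ) :
    ((((List.finRange n).filter fun s => j < s).map fun s =>
        pcomm (x s) (x j) ^ (α s * α j)).prod)
      = ((Phi x hc (fun k l => if l = j ∧ j < k then α k * α j else 0)
          : Subgroup.center G) : G) := by
  have hco : (((List.finRange n).filter fun s => j < s).map fun s =>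
        pcomm (x s) (x j) ^ (α s * α j))
      = (((List.finRange n).filter fun s => j < s).map fun s =>
          ((D x hc s j ^ (α s * α j) : Subgroup.center G) : G)) := by
    apply List.map_congr_left
    intro q _
    rw [SubgroupClass.coe_zpow]
    rfl
  rw [hco, coe_map_prod]
  congr 1
  rw [list_filter_map_to_fin (fun s => j < s), Phi]
  refine Finset.prod_congr rfl fun k _ => ?_
  rw [Finset.prod_eq_single j (fun b _ hb => by rw [if_neg (fun hh => hb hh.1), zpow_zero])
    (fun hj => absurd (Finset.mem_univ j) hj)]
  by_cases h : j < k
  · rw [if_pos h, if_pos ⟨rfl, h⟩]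
  · rw [if_neg h, if_neg (fun hh => h hh.2), zpow_zero]

theorem key_arith (i j : Fin n) (α : Fin n → ℤ) (ε : ℤ) (k l : Fin n) (hlk : l < k) :
    (Cmat (Emap j α) i ε k l + Bmat j α k l) - (Cmat (Emap j α) i ε l k + Bmat j α l k)
      = Bmat j (fun t => if t = i then α t + (if i = j then 2 * ε else ε) else α t) k l
        - Bmat j (fun t => if t = i then α t + (if i = j then 2 * ε else ε) else α t) l k := by
  have hkl : ¬ k < l := asymm hlk
  have hnekl : ¬ k = l := fun h => hkl (h ▸ hlk)
  have hnelk : ¬ l = k := fun h => hnekl h.symm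
  simp only [Bmat, Cmat, Emap, if_pos hlk, if_neg hkl, add_zero, sub_zero]
  by_cases hki : k = i
  · subst hki
    by_cases hkj : k = j
    · subst hkj
      simp [hnelk, hnekl, hkl]
      try first | ring | (split_ifs <;> ring)
    · by_cases hlj : l = j
      · subst hlj
        simp [hnelk, hnekl, hkl, hkj]
        try first | ring | (split_ifs <;> ring)
      · simp [hnelk, hnekl, hkl, hkj, hlj]
        try first | ring | (split_ifs <;> ring)
  · by_cases hli : l = i
    · subst hli
      by_cases hkj : k = j
      · subst hkj
        simp [hnelk, hnekl, hkl, hki, hlk]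
        try first | ring | (split_ifs <;> ring)
      · by_cases hlj : l = j
        · subst hlj
          simp [hnelk, hnekl, hkl, hki, hkj, hlk]
          try first | ring | (split_ifs <;> ring)
        · simp [hnelk, hnekl, hkl, hki, hkj, hlj, hlk]
          try first | ring | (split_ifs <;> ring)
    · simp [hnelk, hnekl, hkl, hki, hli]
      try first | ring | (split_ifs <;> ring)

theorem Hd_zero : Hd x (fun _ => (0 : ℤ)) = 1 := by
  rw [Hd]
  apply List.prod_eq_one
  intro a ha
  rw [List.mem_map] at ha
  obtain ⟨t, _, rfl⟩ := ha
  exact zpow_zero _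

theorem palindrome_normal (hn : 0 < n) (w : List (Fin n × Bool)) (hw : w.Palindrome) :
    ∃ (j : Fin n) (α : Fin n → ℤ),
      evalWord x w = Hd x (Emap j α) * ((Phi x hc (Bmat j α) : Subgroup.center G) : G) := by
  induction hw with
  | nil =>
    refine ⟨⟨0, hn⟩, 0, ?_⟩
    have h1 : Emap (n := n) ⟨0, hn⟩ 0 = fun _ => 0 := by
      funext t
      simp [Emap]
    have h2 : Phi x hc (Bmat ⟨0, hn⟩ 0) = 1 := by
      apply Phi_zero
      intro k l
      simp [Bmat]
    rw [h1, h2, Hd_zero]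
    simp [evalWord]
  | singleton a =>
    obtain ⟨i, b⟩ := a
    refine ⟨i, fun t => if t = i then (if b then 1 else -1) else 0, ?_⟩
    set ε : ℤ := if b then 1 else -1 with hε
    have h1 : evalWord x [(i, b)] = x i ^ ε := by
      cases b <;> simp [evalWord, hε]
    have h2 : Emap i (fun t => if t = i then ε else 0) = fun t => if t = i then ε else 0 := by
      funext t
      by_cases h : t = i
      · subst h; simp [Emap]
      · simp [Emap, h]
    have h3 : Phi x hc (Bmat i fun t => if t = i then ε else 0) = 1 := by
      apply Phi_zero
      intro k l
      rw [Bmat]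
      by_cases hlk : l < k
      · rw [if_pos hlk]
        have hne : ¬ (k = i ∧ l = i) := fun hh => absurd (hh.1.trans hh.2.symm) (ne_of_gt hlk)
        by_cases hki : k = i
        · have hli : ¬ l = i := fun hh => hne ⟨hki, hh⟩
          simp [hki, hli]
        · simp [hki]
      · rw [if_neg hlk]
    rw [h1, h2, h3, H_single]
    simp
  | cons_concat a hp ih =>
    obtain ⟨i, b⟩ := a
    obtain ⟨j, α, hwEq⟩ := ih
    set ε : ℤ := if b then 1 else -1 with hε
    rename_i w
    have heval : evalWord x ((i, b) :: (w ++ [(i, b)])) = x i ^ ε * evalWord x w * x i ^ ε := by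
      cases b <;> simp [evalWord, hε, mul_assoc]
    refine ⟨j, fun t => if t = i then α t + (if i = j then 2 * ε else ε) else α t, ?_⟩
    have key1 : Emap j (fun t => if t = i then α t + (if i = j then 2 * ε else ε) else α t)
        = fun t => Emap j α t + if t = i then 2 * ε else 0 := by
      funext t
      by_cases hti : t = i
      · subst hti
        by_cases htj : t = j
        · subst htj
          simp [Emap]
        · simp [Emap, htj]
          try ring
      · by_cases htj : t = j
        · subst htj
          simp [Emap, hti]
          try (intro h; exact absurd h.symm hti)
        · simp [Emap, hti, htj]
    have key2 : Phi x hc (Cmat (Emap j α) i ε) * Phi x hc (Bmat j α)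
        = Phi x hc (Bmat j (fun t => if t = i then α t + (if i = j then 2 * ε else ε) else α t)) := by
      rw [← Phi_add]
      exact Phi_eq_of_antisym x hc _ _ (fun k l hlk => key_arith i j α ε k l hlk)
    rw [heval, hwEq]
    calc x i ^ ε * (Hd x (Emap j α) * ((Phi x hc (Bmat j α) : Subgroup.center G) : G)) * x i ^ ε
        = (x i ^ ε * Hd x (Emap j α) * x i ^ ε) * ((Phi x hc (Bmat j α) : Subgroup.center G) : G) := by
          simp only [mul_assoc]
          rw [← centerMul (Phi x hc (Bmat j α)) (x i ^ ε)]
      _ = Hd x (fun t => Emap j α t + if t = i then 2 * ε else 0)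
            * (((((List.finRange n).filter fun t => i < t).map fun t =>
                  D x hc t i ^ (Emap j α t * (2 * ε))).prod
                * ((List.finRange n).map fun t => D x hc i t ^ (ε * Emap j α t)).prod
                : Subgroup.center G) : G)
            * ((Phi x hc (Bmat j α) : Subgroup.center G) : G) := by
          rw [conj_H x hc (Emap j α) i ε]
      _ = Hd x (fun t => Emap j α t + if t = i then 2 * ε else 0)
            * ((Phi x hc (Cmat (Emap j α) i ε) * Phi x hc (Bmat j α) : Subgroup.center G) : G) := by
          rw [corr_eq_Phi x hc (Emap j α) i ε, Subgroup.coe_mul, mul_assoc]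
      _ = Hd x (Emap j (fun t => if t = i then α t + (if i = j then 2 * ε else ε) else α t))
            * ((Phi x hc (Bmat j (fun t => if t = i then α t + (if i = j then 2 * ε else ε)
                  else α t)) : Subgroup.center G) : G) := by
          rw [key1, key2]

open scoped commutatorElement in
theorem pcomm_center {n : ℕ} (a b : FreeGroup (Fin n)) :
    pcomm (QuotientGroup.mk a : FreeNilpotent n 2) (QuotientGroup.mk b)
      ∈ Subgroup.center (FreeNilpotent n 2) := by
  rw [Subgroup.mem_center_iff]
  intro g
  obtain ⟨g', rfl⟩ := QuotientGroup.mk_surjective g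
  have h0 : pcomm (QuotientGroup.mk a : FreeNilpotent n 2) (QuotientGroup.mk b)
      = QuotientGroup.mk (pcomm a b) := rfl
  rw [h0, ← QuotientGroup.mk_mul, ← QuotientGroup.mk_mul, QuotientGroup.eq]
  have hmem : pcomm a b ∈ (⊤ : Subgroup (FreeGroup (Fin n))).lowerCentralSeries 1 := by
    have h1 : pcomm a b = ⁅a⁻¹, b⁻¹⁆ := by
      rw [commutatorElement_def, pcomm]
      group
    rw [h1, Subgroup.top_lowerCentralSeries_one, commutator_def]
    exact Subgroup.commutator_mem_commutator (Subgroup.mem_top _) (Subgroup.mem_top _)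
  have h2 : (g' * pcomm a b)⁻¹ * (pcomm a b * g') = ⁅(pcomm a b)⁻¹, g'⁻¹⁆ := by
    rw [commutatorElement_def]
    group
  rw [h2]
  show ⁅(pcomm a b)⁻¹, g'⁻¹⁆ ∈ ⁅(⊤ : Subgroup (FreeGroup (Fin n))).lowerCentralSeries 1, (⊤ : Subgroup _)⁆
  exact Subgroup.commutator_mem_commutator (Subgroup.inv_mem _ hmem) (Subgroup.mem_top _)

theorem nilGen_central (n : ℕ) (k l : Fin n) :
    pcomm (nilGen n 2 k) (nilGen n 2 l) ∈ Subgroup.center (FreeNilpotent n 2) :=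
  pcomm_center (FreeGroup.of k) (FreeGroup.of l)

end PalAux

open PalAux in
/-- Normal form for palindromes in `N_{n,2}`: every palindrome `p` can be written, for some
index `j` and integers `α_1, …, α_n`, as
`x_1^{2α_1} ⋯ x_{j-1}^{2α_{j-1}} · x_j^{α_j} · x_{j+1}^{2α_{j+1}} ⋯ x_n^{2α_n} ·
 ∏_{l<k, k≠j, l≠j} [x_k,x_l]^{2α_k α_l} · ∏_{t<j} [x_j,x_t]^{α_j α_t} ·
 ∏_{s>j} [x_s,x_j]^{α_s α_j}`, the commutator factors being central in `N_{n,2}`. -/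
theorem palindrome_normal_form_freeNilpotent_two (n : ℕ) (hn : 2 ≤ n)
    (p : FreeNilpotent n 2) (hp : IsPalindrome (nilGen n 2) p) :
    (∀ k l : Fin n,
        pcomm (nilGen n 2 k) (nilGen n 2 l) ∈ Subgroup.center (FreeNilpotent n 2)) ∧
      ∃ (j : Fin n) (α : Fin n → ℤ),
        p = (((List.finRange n).map fun t =>
                nilGen n 2 t ^ (if t = j then α j else 2 * α t)).prod)
            * ((((pairList n).filter fun q => q.1 ≠ j ∧ q.2 ≠ j).map fun q =>
                pcomm (nilGen n 2 q.1) (nilGen n 2 q.2) ^ (2 * α q.1 * α q.2)).prod)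
            * ((((List.finRange n).filter fun t => t < j).map fun t =>
                pcomm (nilGen n 2 j) (nilGen n 2 t) ^ (α j * α t)).prod)
            * ((((List.finRange n).filter fun s => j < s).map fun s =>
                pcomm (nilGen n 2 s) (nilGen n 2 j) ^ (α s * α j)).prod) := by
  have hc : ∀ k l : Fin n,
      pcomm (nilGen n 2 k) (nilGen n 2 l) ∈ Subgroup.center (FreeNilpotent n 2) :=
    nilGen_central n
  refine ⟨hc, ?_⟩
  obtain ⟨w, hrev, heval⟩ := hp
  obtain ⟨j, α, hEq⟩ := palindrome_normal (nilGen n 2) hc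
    (lt_of_lt_of_le Nat.zero_lt_two hn) w (List.Palindrome.of_reverse_eq hrev)
  refine ⟨j, α, ?_⟩
  rw [← heval, hEq]
  rw [C1_eq (nilGen n 2) hc j α, C2_eq (nilGen n 2) hc j α, C3_eq (nilGen n 2) hc j α]
  have hA : Hd (nilGen n 2) (Emap j α)
      = ((List.finRange n).map fun t => nilGen n 2 t ^ (if t = j then α j else 2 * α t)).prod :=
    rfl
  rw [hA]
  have hB : Phi (nilGen n 2) hc (Bmat j α)
      = Phi (nilGen n 2) hc (fun k l => if l < k ∧ k ≠ j ∧ l ≠ j then 2 * α k * α l else 0)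
        * Phi (nilGen n 2) hc (fun k l => if k = j ∧ l < j then α j * α l else 0)
        * Phi (nilGen n 2) hc (fun k l => if l = j ∧ j < k then α k * α j else 0) := by
    rw [← Phi_add, ← Phi_add]
    apply Phi_eq_of_antisym
    intro k l hlk
    have hkl : ¬ k < l := asymm hlk
    have hnekl : ¬ k = l := fun h => hkl (h ▸ hlk)
    have hnelk : ¬ l = k := fun h => hnekl h.symm
    have hf1 : ¬ (l = j ∧ k < j) := fun hh => (lt_asymm (hh.1 ▸ hlk)) hh.2
    have hf2 : ¬ (k = j ∧ j < l) := fun hh => (lt_asymm (hh.1 ▸ hlk)) hh.2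
    have hf3 : ¬ (k < l ∧ l ≠ j ∧ k ≠ j) := fun hh => hkl hh.1
    simp only [Bmat, if_pos hlk, if_neg hkl, if_neg hf1, if_neg hf2, if_neg hf3, add_zero,
      zero_add, sub_zero]
    by_cases hkj : k = j
    · subst hkj
      simp [hnelk, hlk, hkl]
      try first | ring | (split_ifs <;> ring)
    · by_cases hlj : l = j
      · subst hlj
        simp [hkj, hlk, hkl]
        try first | ring | (split_ifs <;> ring)
      · simp [hkj, hlj, hlk, hkl]
        try first | ring | (split_ifs <;> ring)
  rw [hB, Subgroup.coe_mul, Subgroup.coe_mul]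
  simp only [mul_assoc]
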